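/- arXiv:2101.11531 — 2 statements merged into one kernel-verified Lean document; each statement's English description precedes it below -/
import Mathlib

section
/- For any x ∈ R^d, the tropical distance from x to the tropical hyperplane H_0 defined by the zero normal vector equals max(x) - secondmax(x), where secondmax(x) is the second largest coordinate value of x (with multiplicity, i.e., the maximum over j ≠ argmax of x_j). -/
noncomputable def dtr {d : ℕ} (v w : Fin d → ℝ) : ℝ :=
  (⨆ i, (v i - w i)) - ⨅ i, (v i - w i)

/-- The tropical hyperplane with normal vector `ω`: the max of `ω i + x i` is attained twice. -/
def Hyp {d : ℕ} (ω : Fin d → ℝ) : Set (Fin d → ℝ) :=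
  {x | ∃ i j : Fin d, i ≠ j ∧ ω i + x i = ω j + x j ∧ ∀ k, ω k + x k ≤ ω i + x i}

/-- Tropical distance from a point to the tropical hyperplane `H_ω`. -/
noncomputable def distH {d : ℕ} (x ω : Fin d → ℝ) : ℝ :=
  sInf (dtr x '' Hyp ω)

/-- The second largest entry (with multiplicity) of a vector. -/
noncomputable def smax {d : ℕ} (x : Fin d → ℝ) : ℝ :=
  sSup {r | ∃ i j : Fin d, i ≠ j ∧ r = min (x i) (x j)}

/-- Open sector `S_ω^i` of the tropical hyperplane `H_ω`. -/
def Sector {d : ℕ} (ω : Fin d → ℝ) (i : Fin d) : Set (Fin d → ℝ) :=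
  {x | ∀ j, j ≠ i → ω j + x j < ω i + x i}

/-- Distance from a point to the tropical hyperplane `H_0` equals max minus second max. -/
theorem distH_zero {d : ℕ} (hd : 2 ≤ d) (x : Fin d → ℝ) :
    distH x 0 = (⨆ i, x i) - smax x := by
  haveI : Nonempty (Fin d) := ⟨⟨0, by omega⟩⟩
  -- argmax i₀
  obtain ⟨i₀, hi₀⟩ := Finite.exists_max x
  -- argmax over j ≠ i₀
  have hT : (Finset.univ.erase i₀).Nonempty := by
    rw [← Finset.card_pos, Finset.card_erase_of_mem (Finset.mem_univ _)]
    simp [Finset.card_univ]; omega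
  obtain ⟨j₀, hj₀mem, hj₀⟩ := Finset.exists_max_image (Finset.univ.erase i₀) x hT
  have hj₀ne : j₀ ≠ i₀ := (Finset.mem_erase.mp hj₀mem).1
  have hj₀max : ∀ k, k ≠ i₀ → x k ≤ x j₀ := fun k hk =>
    hj₀ k (Finset.mem_erase.mpr ⟨hk, Finset.mem_univ _⟩)
  have hj₀le : x j₀ ≤ x i₀ := hi₀ j₀
  -- sup of x
  have hsup : (⨆ i, x i) = x i₀ :=
    le_antisymm (ciSup_le hi₀) (le_ciSup (Set.Finite.bddAbove (Set.finite_range x)) i₀)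
  -- smax
  have hsmax : smax x = x j₀ := by
    have hmem : x j₀ ∈ {r | ∃ i j : Fin d, i ≠ j ∧ r = min (x i) (x j)} :=
      ⟨i₀, j₀, hj₀ne.symm, (min_eq_right hj₀le).symm⟩
    rw [smax]
    apply le_antisymm
    · apply csSup_le ⟨x j₀, hmem⟩
      rintro r ⟨i, j, hij, rfl⟩
      rcases eq_or_ne i i₀ with rfl | hi
      · exact le_trans (min_le_right _ _) (hj₀max j (fun h => hij h.symm))
      · exact le_trans (min_le_left _ _) (hj₀max i hi)
    · apply le_csSup
      · refine ⟨x i₀, ?_⟩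
        rintro r ⟨i, j, hij, rfl⟩
        exact le_trans (min_le_left _ _) (hi₀ i)
      · exact hmem
  rw [hsup, hsmax]
  -- the witness point y
  set y : Fin d → ℝ := fun k => if k = i₀ then x j₀ else x k with hy
  have hyH : y ∈ Hyp 0 := by
    refine ⟨i₀, j₀, hj₀ne.symm, ?_, ?_⟩
    · simp [hy, hj₀ne]
    · intro k
      rcases eq_or_ne k i₀ with rfl | hk
      · simp [hy]
      · simp [hy, hk, hj₀max k hk]
  have hdtr : dtr x y = x i₀ - x j₀ := by
    have hfun : ∀ k, x k - y k = if k = i₀ then x i₀ - x j₀ else 0 := by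
      intro k
      rcases eq_or_ne k i₀ with rfl | hk
      · simp [hy]
      · simp [hy, hk]
    have hsup' : (⨆ k, x k - y k) = x i₀ - x j₀ := by
      apply le_antisymm
      · apply ciSup_le
        intro k; rw [hfun k]
        split
        · exact le_refl _
        · linarith
      · have := le_ciSup (Set.Finite.bddAbove (Set.finite_range (fun k => x k - y k))) i₀
        simpa [hfun i₀] using this
    have hinf' : (⨅ k, x k - y k) = 0 := by
      apply le_antisymm
      · have := ciInf_le (Set.Finite.bddBelow (Set.finite_range (fun k => x k - y k))) j₀
        simpa [hfun j₀, hj₀ne] using this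
      · apply le_ciInf
        intro k; rw [hfun k]
        split
        · linarith
        · exact le_refl _
    rw [dtr, hsup', hinf']; ring
  -- lower bound for any y' ∈ Hyp 0
  have hlb : ∀ r ∈ dtr x '' Hyp 0, x i₀ - x j₀ ≤ r := by
    rintro r ⟨z, ⟨i, j, hij, heq, hmax⟩, rfl⟩
    simp only [Pi.zero_apply, zero_add] at heq hmax
    -- pick an index a ≠ i₀ where z attains its max
    obtain ⟨a, ha, hamax⟩ : ∃ a, a ≠ i₀ ∧ ∀ k, z k ≤ z a := by
      rcases eq_or_ne i i₀ with rfl | hi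
      · exact ⟨j, fun h => hij h.symm, fun k => heq ▸ hmax k⟩
      · exact ⟨i, hi, hmax⟩
    have h1 : x i₀ - z i₀ ≤ ⨆ k, x k - z k :=
      le_ciSup (f := fun k => x k - z k) (Set.Finite.bddAbove (Set.finite_range _)) i₀
    have h2 : (⨅ k, x k - z k) ≤ x a - z a :=
      ciInf_le (f := fun k => x k - z k) (Set.Finite.bddBelow (Set.finite_range _)) a
    have h3 : x a ≤ x j₀ := hj₀max a ha
    have h4 : z i₀ ≤ z a := hamax i₀
    rw [dtr]; linarith
  -- conclude
  rw [distH]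
  apply le_antisymm
  · rw [← hdtr]
    exact csInf_le ⟨x i₀ - x j₀, hlb⟩ ⟨y, hyH, rfl⟩
  · exact le_csInf ⟨dtr x y, y, hyH, rfl⟩ hlb
end

section
/- For any two points v, w ∈ R^d/R1 lying in distinct open sectors of a tropical hyperplane H_ω, the sum of their tropical distances to H_ω is at most their tropical distance to each other: d_tr(v, H_ω) + d_tr(w, H_ω) ≤ d_tr(v, w). -/
lemma dtr_nonneg {d : ℕ} [Nonempty (Fin d)] (v w : Fin d → ℝ) : 0 ≤ dtr v w := by
  obtain ⟨i⟩ := ‹Nonempty (Fin d)›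
  have h1 := ciInf_le (Finite.bddBelow_range fun k => v k - w k) i
  have h2 := le_ciSup (Finite.bddAbove_range fun k => v k - w k) i
  unfold dtr; linarith

lemma distH_le_of_mem {d : ℕ} [Nonempty (Fin d)] (v ω p : Fin d → ℝ) (hp : p ∈ Hyp ω) :
    distH v ω ≤ dtr v p := by
  apply csInf_le
  · refine ⟨0, ?_⟩
    rintro y ⟨q, _, rfl⟩
    exact dtr_nonneg v q
  · exact ⟨p, hp, rfl⟩

lemma dtr_update {d : ℕ} (v : Fin d → ℝ) (i j : Fin d) (hij : i ≠ j) (a : ℝ) (ha : 0 ≤ a) :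
    dtr v (Function.update v j (v j + a)) = a := by
  have hne : Nonempty (Fin d) := ⟨i⟩
  have hsup : (⨆ k, (v k - Function.update v j (v j + a) k)) = 0 := by
    apply le_antisymm
    · apply ciSup_le; intro k
      by_cases hk : k = j
      · subst hk; simp; linarith
      · simp [Function.update_of_ne hk]
    · have := le_ciSup (Finite.bddAbove_range fun k => v k - Function.update v j (v j + a) k) i
      simpa [Function.update_of_ne hij] using this
  have hinf : (⨅ k, (v k - Function.update v j (v j + a) k)) = -a := by
    apply le_antisymm
    · have := ciInf_le (Finite.bddBelow_range fun k => v k - Function.update v j (v j + a) k) j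
      simpa using this
    · apply le_ciInf; intro k
      by_cases hk : k = j
      · subst hk; simp
      · simp [Function.update_of_ne hk]; linarith
  simp [dtr, hsup, hinf]

/-- If `v` and `w` lie in distinct open sectors of `H_ω`, the sum of their tropical distances
to `H_ω` is at most their tropical distance to each other. -/
theorem distH_add_distH_le {d : ℕ} (hd : 0 < d) (ω v w : Fin d → ℝ) (i j : Fin d)
    (hij : i ≠ j) (hv : v ∈ Sector ω i) (hw : w ∈ Sector ω j) :
    distH v ω + distH w ω ≤ dtr v w := by
  have hne : Nonempty (Fin d) := ⟨i⟩
  set a := (ω i + v i) - (ω j + v j) with ha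
  set b := (ω j + w j) - (ω i + w i) with hb
  have hva : 0 < a := by have := hv j hij.symm; linarith
  have hwb : 0 < b := by have := hw i hij; linarith
  set p := Function.update v j (v j + a) with hp
  set q := Function.update w i (w i + b) with hq
  have hpH : p ∈ Hyp ω := by
    refine ⟨i, j, hij, ?_, ?_⟩
    · simp [hp, Function.update_of_ne hij]; ring
    · intro k
      by_cases hk : k = j
      · subst hk; simp [hp, Function.update_of_ne hij]; ring_nf; linarith [ha]
      · rw [hp, Function.update_of_ne hk, Function.update_of_ne hij]
        by_cases hk' : k = i
        · subst hk'; rfl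
        · exact le_of_lt (hv k hk')
  have hqH : q ∈ Hyp ω := by
    refine ⟨j, i, hij.symm, ?_, ?_⟩
    · simp [hq, Function.update_of_ne hij.symm]; ring
    · intro k
      by_cases hk : k = i
      · subst hk; simp [hq, Function.update_of_ne hij.symm]; ring_nf; linarith [hb]
      · rw [hq, Function.update_of_ne hk, Function.update_of_ne hij.symm]
        by_cases hk' : k = j
        · subst hk'; rfl
        · exact le_of_lt (hw k hk')
  have h1 : distH v ω ≤ a := by
    have := distH_le_of_mem v ω p hpH
    rwa [hp, dtr_update v i j hij a hva.le] at this
  have h2 : distH w ω ≤ b := by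
    have := distH_le_of_mem w ω q hqH
    rwa [hq, dtr_update w j i hij.symm b hwb.le] at this
  have h3 : v i - w i ≤ ⨆ k, (v k - w k) :=
    le_ciSup (Finite.bddAbove_range fun k => v k - w k) i
  have h4 : (⨅ k, (v k - w k)) ≤ v j - w j :=
    ciInf_le (Finite.bddBelow_range fun k => v k - w k) j
  have : a + b ≤ dtr v w := by unfold dtr; linarith
  linarith
end
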